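/- arXiv:2012.02143 — 3 statements merged into one kernel-verified Lean document; each statement's English description precedes it below -/
import Mathlib

section
/- Let ι : ℕ^ℕ → ℕ^ℕ be injective and B := range(ι). Define the problem f with dom(f) := B and, for p ∈ B: f(p) := ℕ^ℕ \ {Φ_{ι⁻¹(p)}(p)} if p ∈ dom(Φ_{ι⁻¹(p)}), and f(p) := ℕ^ℕ otherwise. Then: (a) f is discontinuous (has no continuous realizer); and (b) if f is effectively discontinuous, then there exists a continuous injective map g : {0,1}^ℕ → ℕ^ℕ (Cantor space with the product topology) with range(g) ⊆ B, i.e., a continuous embedding of Cantor space into B. -/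
noncomputable section

/-- Baire space `ℕ^ℕ`. -/
abbrev Baire : Type := ℕ → ℕ

/-- The Cantor pairing `⟨n,k⟩ = (n+k)(n+k+1)/2 + k`. -/
def cpair (n k : ℕ) : ℕ := (n + k) * (n + k + 1) / 2 + k

/-- The inverse of the Cantor pairing. -/
noncomputable def cunpair (m : ℕ) : ℕ × ℕ :=
  Classical.epsilon fun x : ℕ × ℕ => cpair x.1 x.2 = m

/-- A fixed bijective numbering `w : ℕ → List ℕ` of finite words. -/
def word (n : ℕ) : List ℕ := Denumerable.ofNat (List ℕ) n

/-- `l` is a finite prefix of the infinite sequence `p`. -/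
def IsPrefixOf (l : List ℕ) (p : Baire) : Prop := l = (List.range l.length).map p

/-- Two words are comparable in the prefix order. -/
def WordComparable (u v : List ℕ) : Prop := u <+: v ∨ v <+: u

/-- The word `w(n_i)` decoded from the `i`-th entry of the code `q`. -/
noncomputable def wn (q : Baire) (i : ℕ) : List ℕ := word (cunpair (q i)).1

/-- The word `w(k_i)` decoded from the `i`-th entry of the code `q`. -/
noncomputable def wk (q : Baire) (i : ℕ) : List ℕ := word (cunpair (q i)).2

/-- The code `q` is consistent. -/
def ConsistentCode (q : Baire) : Prop :=
  ∀ i j, WordComparable (wn q i) (wn q j) → WordComparable (wk q i) (wk q j)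

/-- The continuous partial function `Φ_q :⊆ ℕ^ℕ → ℕ^ℕ` coded by `q`. -/
noncomputable def Phi (q : Baire) : Baire →. Baire := fun p =>
  ⟨ConsistentCode q ∧ ∀ m : ℕ, ∃ i, IsPrefixOf (wn q i) p ∧ m < (wk q i).length,
   fun _ => Classical.epsilon fun x : Baire =>
      ∀ i, IsPrefixOf (wn q i) p → IsPrefixOf (wk q i) x⟩

/-- The pairing `⟨q,p⟩` on Baire space. -/
def bpair (q p : Baire) : Baire := fun n => if n % 2 = 0 then q (n / 2) else p (n / 2)

/-- Even part of a sequence. -/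
def evens (r : Baire) : Baire := fun n => r (2 * n)

/-- Odd part of a sequence. -/
def odds (r : Baire) : Baire := fun n => r (2 * n + 1)

/-- The universal function `U(⟨q,p⟩) = Φ_q(p)`. -/
noncomputable def U : Baire →. Baire := fun r => Phi (evens r) (odds r)

/-- `h` is monotone for the prefix order. -/
def MonotoneWord (h : List ℕ → List ℕ) : Prop := ∀ u v, u <+: v → h u <+: h v

/-- `h` approximates the partial function `F`. -/
def Approximates (h : List ℕ → List ℕ) (F : Baire →. Baire) : Prop :=
  ∀ p, ∀ hp : (F p).Dom,
    (∀ v, IsPrefixOf v p → IsPrefixOf (h v) ((F p).get hp)) ∧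
    (∀ m : ℕ, ∃ v, IsPrefixOf v p ∧ m < (h v).length)

/-- `F :⊆ ℕ^ℕ → ℕ^ℕ` is continuous: some monotone word function approximates it. -/
def ContinuousPF (F : Baire →. Baire) : Prop := ∃ h, MonotoneWord h ∧ Approximates h F

/-- `F :⊆ ℕ^ℕ → ℕ^ℕ` is computable: some computable monotone word function approximates it. -/
def ComputablePF (F : Baire →. Baire) : Prop :=
  ∃ h, Computable h ∧ MonotoneWord h ∧ Approximates h F

/-- A total function is computable iff it is computable as a partial function with full domain. -/
def ComputableTotal (F : Baire → Baire) : Prop := ComputablePF fun p => Part.some (F p)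

/-- A problem (multivalued function on Baire space). -/
abbrev Problem : Type := Baire → Set Baire

/-- `F` is a realizer of the problem `f`. -/
def Realizes (F : Baire →. Baire) (f : Problem) : Prop :=
  ∀ p, (f p).Nonempty → ∃ h : (F p).Dom, (F p).get h ∈ f p

/-- `f` is continuous: it has a continuous realizer. -/
def ContinuousProblem (f : Problem) : Prop := ∃ F, ContinuousPF F ∧ Realizes F f

/-- The discontinuity problem `DIS`. -/
noncomputable def DIS : Problem := fun p => {q | q ∉ U p}

/-- `D` is a discontinuity function for `f`. -/
def DiscontinuityFunction (D : Baire → Baire) (f : Problem) : Prop :=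
  ∀ q, (f (D q)).Nonempty ∧ ∀ y ∈ Phi q (D q), y ∉ f (D q)

/-- `f` is computably discontinuous. -/
def ComputablyDiscontinuous (f : Problem) : Prop :=
  ∃ D, ComputableTotal D ∧ DiscontinuityFunction D f

/-- `f` is effectively discontinuous. -/
def EffectivelyDiscontinuous (f : Problem) : Prop :=
  ∃ D : Baire → Baire, Continuous D ∧ DiscontinuityFunction D f

/-- Weihrauch reducibility `f ≤_W g`. -/
def WeihrauchRed (f g : Problem) : Prop :=
  ∃ H K : Baire →. Baire, ComputablePF H ∧ ComputablePF K ∧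
    ∀ G : Baire →. Baire, Realizes G g →
      Realizes (fun p => (K p).bind fun s => (G s).bind fun t => H (bpair p t)) f

/-- Strong Weihrauch reducibility `f ≤_sW g`. -/
def StrongWeihrauchRed (f g : Problem) : Prop :=
  ∃ H K : Baire →. Baire, ComputablePF H ∧ ComputablePF K ∧
    ∀ G : Baire →. Baire, Realizes G g →
      Realizes (fun p => (K p).bind fun s => (G s).bind fun t => H t) f

/-- Continuous Weihrauch reducibility `f ≤*_W g`. -/
def ContWeihrauchRed (f g : Problem) : Prop :=
  ∃ H K : Baire →. Baire, ContinuousPF H ∧ ContinuousPF K ∧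
    ∀ G : Baire →. Baire, Realizes G g →
      Realizes (fun p => (K p).bind fun s => (G s).bind fun t => H (bpair p t)) f

/-- Continuous strong Weihrauch reducibility `f ≤*_sW g`. -/
def ContStrongWeihrauchRed (f g : Problem) : Prop :=
  ∃ H K : Baire →. Baire, ContinuousPF H ∧ ContinuousPF K ∧
    ∀ G : Baire →. Baire, Realizes G g →
      Realizes (fun p => (K p).bind fun s => (G s).bind fun t => H t) f

/-- Concatenation of the first `n` moves. -/
def concatN (ms : ℕ → List ℕ) (n : ℕ) : List ℕ := ((List.range n).map ms).flatten

/-- The concatenated play is infinite. -/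
def PlayInf (ms : ℕ → List ℕ) : Prop := ∀ m : ℕ, ∃ n, m < (concatN ms n).length

/-- The infinite sequence determined by an infinite play. -/
noncomputable def playLim (ms : ℕ → List ℕ) : Baire :=
  Classical.epsilon fun p : Baire => ∀ n, IsPrefixOf (concatN ms n) p

/-- Player II wins the run of the Wadge game of `f` given by the moves `xs` of I and `ys` of II. -/
def WadgeIIWins (f : Problem) (xs ys : ℕ → List ℕ) : Prop :=
  (PlayInf xs ∧ (f (playLim xs)).Nonempty) → (PlayInf ys ∧ playLim ys ∈ f (playLim xs))

/-- The list of first `n` moves. -/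
def histW (xs : ℕ → List ℕ) (n : ℕ) : List (List ℕ) := (List.range n).map xs

/-- `σ` is a winning strategy for Player II in the Wadge game of `f`. -/
def WadgeWinningII (f : Problem) (σ : List (List ℕ) → List ℕ) : Prop :=
  ∀ xs : ℕ → List ℕ, WadgeIIWins f xs fun i => σ (histW xs (i + 1))

/-- `σ` is a winning strategy for Player I in the Wadge game of `f`. -/
def WadgeWinningI (f : Problem) (σ : List (List ℕ) → List ℕ) : Prop :=
  ∀ ys : ℕ → List ℕ, ¬ WadgeIIWins f (fun i => σ (histW ys i)) ys

/-- The list of first `n` values of a sequence. -/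
def histN (x : Baire) (n : ℕ) : List ℕ := (List.range n).map x

/-- Player II wins the run `(x,y)` of the Lipschitz game of `f`. -/
def LipIIWins (f : Problem) (x y : Baire) : Prop := (f x).Nonempty → y ∈ f x

/-- `σ` is a winning strategy for Player II in the Lipschitz game of `f`. -/
def LipWinningII (f : Problem) (σ : List ℕ → ℕ) : Prop :=
  ∀ x : Baire, LipIIWins f x fun i => σ (histN x (i + 1))

/-- `σ` is a winning strategy for Player I in the Lipschitz game of `f`. -/
def LipWinningI (f : Problem) (σ : List ℕ → ℕ) : Prop :=
  ∀ y : Baire, ¬ LipIIWins f (fun i => σ (histN y i)) y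

/-- `σ` is a winning strategy for Player II in the Gale–Stewart game `A`. -/
def GSWinningII (A : Set Baire) (σ : List ℕ → ℕ) : Prop :=
  ∀ x : Baire, bpair x (fun i => σ (histN x (i + 1))) ∈ A

/-- `σ` is a winning strategy for Player I in the Gale–Stewart game `A`. -/
def GSWinningI (A : Set Baire) (σ : List ℕ → ℕ) : Prop :=
  ∀ y : Baire, bpair (fun i => σ (histN y i)) y ∉ A

/-- The totalization `Tf` of `f`. -/
def Totalization (f : Problem) : Problem := fun p => {q | (f p).Nonempty → q ∈ f p}

/-- The paired graph `⟨graph(Tf)⟩ ⊆ ℕ^ℕ`. -/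
def pairedGraph (f : Problem) : Set Baire :=
  {r | ∃ x y : Baire, r = bpair x y ∧ y ∈ Totalization f x}

/-- Domain of the word concatenation map `w*`. -/
def wstarDom (p : Baire) : Prop := PlayInf fun i => word (p i)

/-- The word concatenation map `w* : p ↦ w(p 0) w(p 1) ⋯` (on its domain). -/
noncomputable def wstar (p : Baire) : Baire := playLim fun i => word (p i)

/-- The problem `f^w = w*⁻¹ ∘ f ∘ w*`. -/
noncomputable def wordLift (f : Problem) : Problem := fun p =>
  {q | wstarDom p ∧ (f (wstar p)).Nonempty ∧ wstarDom q ∧ wstar q ∈ f (wstar p)}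

/-- The `i`-th component of a tupled sequence. -/
def tupleComp (p : Baire) (i : ℕ) : Baire := fun n => p (cpair i n)

/-- The parallelization `⟨f⟩` of `f`. -/
def Parallelization (f : Problem) : Problem := fun p =>
  {q | ∀ i, tupleComp q i ∈ f (tupleComp p i)}

/-- Turing reducibility: `p` is computable relative to the oracle `q`. -/
def TuringLe (p q : Baire) : Prop := ∃ F : Baire →. Baire, ComputablePF F ∧ p ∈ F q

end

private lemma tri_succ (t : ℕ) : (t+1) * ((t+1)+1) / 2 = t * (t+1) / 2 + (t+1) := by
  have h : (t+1)*((t+1)+1) = t*(t+1) + (t+1)*2 := by ring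
  rw [h, Nat.add_mul_div_right _ _ (by norm_num : 0 < 2)]

private lemma tri_mono {s t : ℕ} (h : s ≤ t) : s*(s+1)/2 ≤ t*(t+1)/2 :=
  Nat.div_le_div_right (Nat.mul_le_mul h (by omega))

private lemma cpair_lt {n k n' k' : ℕ} (h : n + k < n' + k') : cpair n k < cpair n' k' := by
  unfold cpair
  set a := n + k with ha
  set b := n' + k' with hb
  have h1 : k ≤ a := by omega
  have h2 := tri_succ a
  have h3 := tri_mono (show a+1 ≤ b from h)
  omega

private lemma cpair_inj {n k n' k' : ℕ} (h : cpair n k = cpair n' k') : n = n' ∧ k = k' := by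
  rcases lt_trichotomy (n+k) (n'+k') with ht | ht | ht
  · exact absurd h (Nat.ne_of_lt (cpair_lt ht))
  · unfold cpair at h; rw [ht] at h; omega
  · exact absurd h.symm (Nat.ne_of_lt (cpair_lt ht))

private lemma cunpair_cpair (a b : ℕ) : cunpair (cpair a b) = (a, b) := by
  have hex : ∃ x : ℕ × ℕ, cpair x.1 x.2 = cpair a b := ⟨(a, b), rfl⟩
  have h := Classical.epsilon_spec hex
  have h2 := cpair_inj h
  unfold cunpair
  exact Prod.ext h2.1 h2.2

private lemma word_encode (l : List ℕ) : word (Encodable.encode l) = l :=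
  Denumerable.ofNat_encode l

private lemma isPrefixOf_histN (x : Baire) (k : ℕ) : IsPrefixOf ((List.range k).map x) x := by
  simp [IsPrefixOf]

private lemma prefix_agree {l : List ℕ} {a b : Baire} (ha : IsPrefixOf l a)
    (hb : IsPrefixOf l b) {n : ℕ} (hn : n < l.length) : a n = b n := by
  have h1 := congrArg (fun t : List ℕ => t[n]?) ha
  have h2 := congrArg (fun t : List ℕ => t[n]?) hb
  simp only [List.getElem?_map] at h1 h2
  rw [List.getElem?_range hn] at h1 h2
  simp only [h1] at h2
  exact Option.some_injective _ h2

private lemma mem_Phi {q p x : Baire} (hc : ConsistentCode q)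
    (hd : ∀ m, ∃ i, IsPrefixOf (wn q i) p ∧ m < (wk q i).length)
    (hx : ∀ i, IsPrefixOf (wn q i) p → IsPrefixOf (wk q i) x) :
    x ∈ Phi q p := by
  refine ⟨⟨hc, hd⟩, ?_⟩
  have hP : ∀ i, IsPrefixOf (wn q i) p → IsPrefixOf (wk q i)
      (Classical.epsilon fun y : Baire => ∀ i, IsPrefixOf (wn q i) p → IsPrefixOf (wk q i) y) :=
    Classical.epsilon_spec
      (p := fun y : Baire => ∀ i, IsPrefixOf (wn q i) p → IsPrefixOf (wk q i) y) ⟨x, hx⟩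
  funext n
  obtain ⟨i, hpre, hlen⟩ := hd n
  exact prefix_agree (hP i hpre) (hx i hpre) hlen

private lemma exists_not_mem_part (o : Part Baire) : ∃ y : Baire, y ∉ o := by
  by_contra hcon
  push_neg at hcon
  have h0 : (fun _ => 0 : Baire) ∈ o := hcon _
  have h1 : (fun _ => 1 : Baire) ∈ o := hcon _
  have := congrFun (Part.mem_unique h0 h1) 0
  simp at this

/-- The problem built from an injection `ι` is discontinuous, and if it is effectively
discontinuous then Cantor space embeds continuously into `range ι`. -/
theorem embedding_from_effective_discontinuity (ι : Baire → Baire)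
    (hι : Function.Injective ι) (f : Problem)
    (hf₁ : ∀ x : Baire, f (ι x) = {y | y ∉ Phi x (ι x)})
    (hf₂ : ∀ p : Baire, p ∉ Set.range ι → f p = ∅) :
    ¬ ContinuousProblem f ∧
      (EffectivelyDiscontinuous f →
        ∃ g : (ℕ → Bool) → Baire, Continuous g ∧ Function.Injective g ∧
          Set.range g ⊆ Set.range ι) := by
  constructor
  · rintro ⟨F, ⟨h, hmono, happ⟩, hreal⟩
    set q : Baire := fun i => cpair i (Encodable.encode (h (word i))) with hq
    have hwn : ∀ i, wn q i = word i := by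
      intro i; simp [wn, hq, cunpair_cpair]
    have hwk : ∀ i, wk q i = h (word i) := by
      intro i; simp [wk, hq, cunpair_cpair, word_encode]
    set p := ι q with hp
    have hfp : f p = {y | y ∉ Phi q p} := hf₁ q
    have hne : (f p).Nonempty := by
      rw [hfp]
      obtain ⟨y, hy⟩ := exists_not_mem_part (Phi q p)
      exact ⟨y, hy⟩
    obtain ⟨hdom, hmem⟩ := hreal p hne
    rw [hfp] at hmem
    apply hmem
    apply mem_Phi
    · intro i j hcomp
      rw [hwn i, hwn j] at hcomp
      rw [hwk i, hwk j]
      rcases hcomp with hcc | hcc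
      · exact Or.inl (hmono _ _ hcc)
      · exact Or.inr (hmono _ _ hcc)
    · intro m
      obtain ⟨v, hvp, hvlen⟩ := (happ p hdom).2 m
      refine ⟨Encodable.encode v, ?_, ?_⟩
      · rw [hwn, word_encode]; exact hvp
      · rw [hwk, word_encode]; exact hvlen
    · intro i hpre
      rw [hwn] at hpre
      rw [hwk]
      exact (happ p hdom).1 (word i) hpre
  · rintro ⟨D, hDcont, hDfun⟩
    set e : (ℕ → Bool) → Baire := fun b n => cond (b n) 1 0 with he
    have e_inj : Function.Injective e := by
      intro b b' hbb
      funext n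
      have hn := congrFun hbb n
      simp only [he] at hn
      cases hb : b n <;> cases hb' : b' n <;> rw [hb, hb'] at hn <;> simp_all
    set Q : (ℕ → Bool) → Baire := fun b j =>
      cpair (Nat.unpair j).1 (Encodable.encode ((List.range (Nat.unpair j).2).map (e b))) with hQ
    have hwn : ∀ b j, wn (Q b) j = word (Nat.unpair j).1 := by
      intro b j; simp [wn, hQ, cunpair_cpair]
    have hwk : ∀ b j, wk (Q b) j = (List.range (Nat.unpair j).2).map (e b) := by
      intro b j; simp [wk, hQ, cunpair_cpair, word_encode]
    have hPhi : ∀ b p, e b ∈ Phi (Q b) p := by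
      intro b p
      apply mem_Phi
      · intro i j _
        rw [hwk b i, hwk b j]
        rcases le_total (Nat.unpair i).2 (Nat.unpair j).2 with hle | hle
        · refine Or.inl (List.IsPrefix.map _ ?_)
          rw [List.prefix_iff_eq_take, List.take_range]
          simp [Nat.min_eq_left hle]
        · refine Or.inr (List.IsPrefix.map _ ?_)
          rw [List.prefix_iff_eq_take, List.take_range]
          simp [Nat.min_eq_left hle]
      · intro m
        refine ⟨Nat.pair (Encodable.encode ([] : List ℕ)) (m+1), ?_, ?_⟩
        · rw [hwn, Nat.unpair_pair, word_encode]
          simp [IsPrefixOf]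
        · rw [hwk, Nat.unpair_pair]
          simp
      · intro i _
        rw [hwk]
        exact isPrefixOf_histN (e b) _
    have hrange : ∀ b, D (Q b) ∈ Set.range ι := by
      intro b
      by_contra hcon
      have := (hDfun (Q b)).1
      rw [hf₂ _ hcon] at this
      exact Set.not_nonempty_empty this
    have hval : ∀ b x, ι x = D (Q b) → e b ∈ Phi x (ι x) := by
      intro b x hx
      have havoid := (hDfun (Q b)).2 (e b) (hPhi b (D (Q b)))
      by_contra hcon
      apply havoid
      rw [← hx, hf₁ x]
      exact hcon
    refine ⟨fun b => D (Q b), ?_, ?_, ?_⟩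
    · apply hDcont.comp
      apply continuous_pi
      intro j
      have heq : (fun b => Q b j) =
          (fun v : Fin (Nat.unpair j).2 → Bool => cpair (Nat.unpair j).1
            (Encodable.encode ((List.range (Nat.unpair j).2).map
              (fun n => cond (if hn : n < (Nat.unpair j).2 then v ⟨n, hn⟩ else false) 1 0))))
          ∘ (fun b (i : Fin (Nat.unpair j).2) => b i) := by
        funext b
        simp only [Function.comp, hQ]
        congr 1
        congr 1
        apply List.map_congr_left
        intro n hn
        rw [List.mem_range] at hn
        simp [he, hn]
      rw [heq]
      exact continuous_of_discreteTopology.comp (continuous_pi fun i => continuous_apply (i : ℕ))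
    · intro b b' hbb
      obtain ⟨x, hx⟩ := hrange b
      have hx' : ι x = D (Q b') := by rw [hx]; exact hbb
      have h1 := hval b x hx
      have h2 := hval b' x hx'
      exact e_inj (Part.mem_unique h1 h2)
    · rintro _ ⟨b, rfl⟩
      exact hrange b
end

section
/- There exists a total problem f : ℕ^ℕ ⇉ ℕ^ℕ (i.e., f(p) ≠ ∅ for all p ∈ ℕ^ℕ) that is parallelizable (f ≤_W ⟨f⟩ and ⟨f⟩ ≤_W f), discontinuous (has no continuous realizer), but not effectively discontinuous. -/
noncomputable section
namespace Helper
open Classical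

/-! ### Cantor pairing -/

lemma two_mul_tri (s : ℕ) : 2 * (s * (s + 1) / 2) = s * (s + 1) := by
  have h : 2 ∣ s * (s + 1) := (Nat.even_mul_succ_self s).two_dvd
  omega

lemma cpair_eq (n k : ℕ) : cpair n k = (n + k) * (n + k + 1) / 2 + k := rfl

lemma tri_lt_tri {s t : ℕ} (h : s < t) : s * (s + 1) / 2 + s < t * (t + 1) / 2 := by
  have h1 := two_mul_tri s
  have h2 := two_mul_tri t
  nlinarith

lemma cpair_injective : ∀ {n k n' k' : ℕ}, cpair n k = cpair n' k' → n = n' ∧ k = k' := by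
  intro n k n' k' h
  unfold cpair at h
  rcases Nat.lt_trichotomy (n + k) (n' + k') with hlt | heq | hgt
  · exfalso
    have := tri_lt_tri hlt
    omega
  · rw [heq] at h
    have hk : k = k' := by omega
    exact ⟨by omega, hk⟩
  · exfalso
    have := tri_lt_tri hgt
    omega

lemma cunpair_cpair (n k : ℕ) : cunpair (cpair n k) = (n, k) := by
  have h := Classical.epsilon_spec (p := fun x : ℕ × ℕ => cpair x.1 x.2 = cpair n k)
    ⟨(n, k), rfl⟩
  have h2 := cpair_injective h
  unfold cunpair
  ext <;> simp [h2.1, h2.2]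

/-- computable second component of the Cantor unpairing -/
def csnd (m : ℕ) : ℕ := m - (Nat.sqrt (8 * m + 1) - 1) / 2 * ((Nat.sqrt (8 * m + 1) - 1) / 2 + 1) / 2

lemma csnd_cpair (n k : ℕ) : csnd (cpair n k) = k := by
  set s := n + k with hs
  have hm : cpair n k = s * (s + 1) / 2 + k := rfl
  have htri := two_mul_tri s
  have hsq : Nat.sqrt (8 * cpair n k + 1) = 2 * s + 1 ∨ Nat.sqrt (8 * cpair n k + 1) = 2 * s + 2 := by
    have hlb : 2 * s + 1 ≤ Nat.sqrt (8 * cpair n k + 1) := by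
      rw [Nat.le_sqrt]
      nlinarith [htri, hm]
    have hub : Nat.sqrt (8 * cpair n k + 1) < 2 * s + 3 := by
      rw [Nat.sqrt_lt]
      have hks : k ≤ s := by omega
      nlinarith [htri, hm]
    omega
  have : (Nat.sqrt (8 * cpair n k + 1) - 1) / 2 = s := by rcases hsq with h | h <;> omega
  unfold csnd
  rw [this]
  omega

lemma primrec_csnd : Primrec csnd := by
  unfold csnd
  have hsq : Primrec fun m => (Nat.sqrt (8 * m + 1) - 1) / 2 :=
    Primrec.nat_div.comp
      (Primrec.nat_sub.comp
        (Primrec.nat_sqrt.comp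
          (Primrec.nat_add.comp (Primrec.nat_mul.comp (Primrec.const 8) Primrec.id)
            (Primrec.const 1)))
        (Primrec.const 1))
      (Primrec.const 2)
  exact Primrec.nat_sub.comp Primrec.id
    (Primrec.nat_div.comp
      (Primrec.nat_mul.comp hsq (Primrec.nat_add.comp hsq (Primrec.const 1)))
      (Primrec.const 2))

lemma primrec_cpair : Primrec₂ cpair := by
  unfold cpair
  have hadd : Primrec₂ ((· + ·) : ℕ → ℕ → ℕ) := Primrec.nat_add
  exact Primrec.nat_add.comp₂
    (Primrec.nat_div.comp₂
      (Primrec.nat_mul.comp₂ hadd (Primrec.nat_add.comp₂ hadd (Primrec₂.const 1)))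
      (Primrec₂.const 2))
    Primrec₂.right

end Helper
end
noncomputable section
namespace Helper
open Classical

/-! ### Prefixes -/

lemma length_histN (p : Baire) (n : ℕ) : (histN p n).length = n := by
  simp [histN]

lemma isPrefixOf_iff_histN {v : List ℕ} {p : Baire} :
    IsPrefixOf v p ↔ v = histN p v.length := Iff.rfl

lemma isPrefixOf_histN (p : Baire) (n : ℕ) : IsPrefixOf (histN p n) p := by
  rw [isPrefixOf_iff_histN, length_histN]

lemma isPrefixOf_nil (p : Baire) : IsPrefixOf [] p := rfl

lemma histN_getD {p : Baire} {n k : ℕ} (h : n < k) : (histN p k).getD n 0 = p n := by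
  have hlt : n < ((List.range k).map p).length := by simpa using h
  rw [histN, List.getD_eq_getElem _ _ hlt]
  simp

lemma isPrefixOf_getD {v : List ℕ} {p : Baire} (h : IsPrefixOf v p) {i : ℕ}
    (hi : i < v.length) : v.getD i 0 = p i := by
  rw [isPrefixOf_iff_histN] at h
  rw [h] at hi ⊢
  rw [length_histN] at hi
  exact histN_getD hi

lemma histN_take {p : Baire} {a b : ℕ} (h : a ≤ b) : histN p a = (histN p b).take a := by
  rw [histN, histN, ← List.map_take, List.take_range, Nat.min_eq_left h]

lemma histN_prefix {p : Baire} {a b : ℕ} (h : a ≤ b) : histN p a <+: histN p b := by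
  rw [histN_take h]; exact List.take_prefix _ _

lemma prefix_of_both {u v : List ℕ} {p : Baire} (hu : IsPrefixOf u p) (hv : IsPrefixOf v p)
    (h : u.length ≤ v.length) : u <+: v := by
  rw [isPrefixOf_iff_histN] at hu hv
  rw [hu, hv]
  exact histN_prefix h

lemma agree_of_isPrefixOf {l : List ℕ} {x y : Baire} (hx : IsPrefixOf l x)
    (hy : IsPrefixOf l y) {n : ℕ} (hn : n < l.length) : x n = y n := by
  rw [← isPrefixOf_getD hx hn, isPrefixOf_getD hy hn]

/-! ### Limits of monotone word functions -/

/-- The limit value of the word function `h` along the point `p`. -/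
def hlim (h : List ℕ → List ℕ) (p : Baire) : Baire :=
  Classical.epsilon fun x : Baire => ∀ v, IsPrefixOf v p → IsPrefixOf (h v) x

lemma hlim_eq {h : List ℕ → List ℕ} {p x : Baire}
    (hprod : ∀ m, ∃ v, IsPrefixOf v p ∧ m < (h v).length)
    (hx : ∀ v, IsPrefixOf v p → IsPrefixOf (h v) x) : hlim h p = x := by
  have he := Classical.epsilon_spec
    (p := fun x : Baire => ∀ v, IsPrefixOf v p → IsPrefixOf (h v) x) ⟨x, hx⟩
  funext n
  obtain ⟨v, hvp, hn⟩ := hprod n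
  exact agree_of_isPrefixOf (he v hvp) (hx v hvp) hn

/-- Everywhere productive word functions. -/
def Good (h : List ℕ → List ℕ) : Prop :=
  ∀ p : Baire, ∀ m : ℕ, ∃ v, IsPrefixOf v p ∧ m < (h v).length

end Helper
end
noncomputable section
namespace Helper
open Classical

/-! ### Coordinate-rearranging computable functions -/

def gofold (g : ℕ → ℕ) (b : ℕ) : ℕ → ℕ
  | 0 => 0
  | t + 1 => if gofold g b t = t ∧ g t < b then t + 1 else gofold g b t

lemma gofold_le' (g : ℕ → ℕ) (b : ℕ) : ∀ t, gofold g b t ≤ t := by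
  intro t
  induction t with
  | zero => simp [gofold]
  | succ t ih => rw [gofold]; split <;> omega

lemma gofold_lt_b (g : ℕ → ℕ) (b : ℕ) : ∀ t i, i < gofold g b t → g i < b := by
  intro t
  induction t with
  | zero => simp [gofold]
  | succ t ih =>
    intro i hi
    rw [gofold] at hi
    split at hi
    · rename_i hcond
      rcases Nat.lt_succ_iff_lt_or_eq.1 hi with h | h
      · exact ih i (by rw [hcond.1]; exact h)
      · exact h ▸ hcond.2
    · exact ih i hi

lemma gofold_full (g : ℕ → ℕ) (b : ℕ) : ∀ t, (∀ i < t, g i < b) → gofold g b t = t := by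
  intro t
  induction t with
  | zero => simp [gofold]
  | succ t ih =>
    intro h
    rw [gofold, ih fun i hi => h i (Nat.lt_succ_of_lt hi)]
    simp [h t (Nat.lt_succ_self t)]

lemma gofold_succ_ge (g : ℕ → ℕ) (b t : ℕ) : gofold g b t ≤ gofold g b (t + 1) := by
  conv_rhs => rw [gofold]
  split
  · have := gofold_le' g b t; omega
  · exact le_rfl

lemma gofold_ge (g : ℕ → ℕ) (b c : ℕ) (hc : ∀ i < c, g i < b) :
    ∀ t, c ≤ t → c ≤ gofold g b t := by
  intro t
  induction t with
  | zero => omega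
  | succ t ih =>
    intro hct
    rcases Nat.lt_succ_iff_lt_or_eq.1 (Nat.lt_succ_of_le hct) with h | h
    · exact le_trans (ih (by omega)) (gofold_succ_ge g b t)
    · rw [h] at hc ⊢
      rw [gofold_full g b (t + 1) hc]

def cnt (g : ℕ → ℕ) (v : List ℕ) : ℕ := gofold g v.length v.length

def happrox (g : ℕ → ℕ) (v : List ℕ) : List ℕ :=
  (List.range (cnt g v)).map fun i => v.getD (g i) 0

lemma length_happrox (g : ℕ → ℕ) (v : List ℕ) : (happrox g v).length = cnt g v := by
  simp [happrox]

lemma cnt_lt_b {g : ℕ → ℕ} {v : List ℕ} {i : ℕ} (h : i < cnt g v) : g i < v.length :=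
  gofold_lt_b g v.length v.length i h

lemma cnt_mono {g : ℕ → ℕ} {v w : List ℕ} (h : v <+: w) : cnt g v ≤ cnt g w := by
  apply gofold_ge
  · intro i hi
    exact lt_of_lt_of_le (cnt_lt_b hi) h.length_le
  · exact le_trans (gofold_le' _ _ _) h.length_le

lemma prefix_getD {v w : List ℕ} (h : v <+: w) {i : ℕ} (hi : i < v.length) :
    v.getD i 0 = w.getD i 0 := by
  obtain ⟨t, rfl⟩ := h
  rw [List.getD_append _ _ _ _ hi]

lemma monotone_happrox (g : ℕ → ℕ) : MonotoneWord (happrox g) := by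
  intro v w hvw
  have hle := cnt_mono (g := g) hvw
  have : happrox g v = (happrox g w).take (cnt g v) := by
    unfold happrox
    rw [← List.map_take, List.take_range, Nat.min_eq_left hle]
    apply List.map_congr_left
    intro i hi
    rw [List.mem_range] at hi
    exact prefix_getD hvw (cnt_lt_b hi)
  rw [this]
  exact List.take_prefix _ _

lemma gofold_eq_rec (g : ℕ → ℕ) (b n : ℕ) :
    gofold g b n = Nat.rec 0 (fun t IH => if IH = t ∧ g t < b then t + 1 else IH) n := by
  induction n with
  | zero => rfl
  | succ n ih => rw [gofold, ih]

lemma primrec_cnt {g : ℕ → ℕ} (hg : Primrec g) : Primrec (cnt g) := by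
  have hh : Primrec₂ fun (a : List ℕ) (q : ℕ × ℕ) =>
      if q.2 = q.1 ∧ g q.1 < a.length then q.1 + 1 else q.2 := by
    apply Primrec.ite
    · apply PrimrecPred.and
      · exact Primrec.eq.comp (Primrec.snd.comp Primrec.snd) (Primrec.fst.comp Primrec.snd)
      · exact Primrec.nat_lt.comp (hg.comp (Primrec.fst.comp Primrec.snd))
          (Primrec.list_length.comp Primrec.fst)
    · exact Primrec.succ.comp (Primrec.fst.comp Primrec.snd)
    · exact Primrec.snd.comp Primrec.snd
  have h := Primrec.nat_rec' Primrec.list_length (Primrec.const 0) hh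
  exact h.of_eq fun v => (gofold_eq_rec g v.length v.length).symm

lemma primrec_happrox {g : ℕ → ℕ} (hg : Primrec g) : Primrec (happrox g) := by
  unfold happrox
  apply Primrec.list_map (Primrec.list_range.comp (primrec_cnt hg))
  exact (Primrec.list_getD 0).comp Primrec.fst (hg.comp Primrec.snd)

lemma approx_coord (g : ℕ → ℕ) :
    Approximates (happrox g) fun p => Part.some fun m => p (g m) := by
  intro p hp
  constructor
  · intro v hv
    show happrox g v = (List.range (happrox g v).length).map _
    rw [length_happrox, happrox]
    apply List.map_congr_left
    intro i hi
    rw [List.mem_range] at hi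
    have h1 : g i < v.length := cnt_lt_b hi
    rw [isPrefixOf_getD hv h1]
    rfl
  · intro m
    set N := max ((Finset.range (m + 1)).sup g + 1) (m + 1) with hN
    refine ⟨histN p N, isPrefixOf_histN p N, ?_⟩
    rw [length_happrox]
    have hlen : (histN p N).length = N := length_histN p N
    have : m + 1 ≤ cnt g (histN p N) := by
      unfold cnt
      rw [hlen]
      apply gofold_ge
      · intro i hi
        have : g i ≤ (Finset.range (m + 1)).sup g :=
          Finset.le_sup (Finset.mem_range.2 hi)
        omega
      · omega
    omega

lemma compPF_coord {g : ℕ → ℕ} (hg : Primrec g) :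
    ComputablePF fun p => Part.some fun m => p (g m) :=
  ⟨happrox g, (primrec_happrox hg).to_comp, monotone_happrox g, approx_coord g⟩

lemma compPF_id : ComputablePF fun p : Baire => Part.some p :=
  compPF_coord Primrec.id

lemma compPF_comp {F₁ F₂ : Baire →. Baire} (h1 : ComputablePF F₁) (h2 : ComputablePF F₂) :
    ComputablePF fun p => (F₁ p).bind F₂ := by
  obtain ⟨h, hc, hm, ha⟩ := h1
  obtain ⟨h', hc', hm', ha'⟩ := h2
  refine ⟨fun v => h' (h v), hc'.comp hc, fun u v huv => hm' _ _ (hm u v huv), ?_⟩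
  intro p hp
  set z := ((F₁ p).bind F₂).get hp with hz
  have hzmem : z ∈ (F₁ p).bind F₂ := Part.get_mem hp
  replace hzmem := Part.mem_bind_iff.1 hzmem
  obtain ⟨s, hs, hzs⟩ := hzmem
  have hd1 : (F₁ p).Dom := Part.dom_iff_mem.2 ⟨s, hs⟩
  have hget1 : (F₁ p).get hd1 = s := Part.get_eq_of_mem hs hd1
  have hd2 : (F₂ s).Dom := Part.dom_iff_mem.2 ⟨z, hzs⟩
  have hget2 : (F₂ s).get hd2 = z := Part.get_eq_of_mem hzs hd2
  have ha1 := ha p hd1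
  have ha2 := ha' s hd2
  constructor
  · intro v hv
    have hpre : IsPrefixOf (h v) s := hget1 ▸ ha1.1 v hv
    have := ha2.1 (h v) hpre
    rwa [hget2] at this
  · intro m
    obtain ⟨u, hu, hum⟩ := ha2.2 m
    obtain ⟨v, hvp, hv⟩ := ha1.2 u.length
    have hpre : IsPrefixOf (h v) s := hget1 ▸ ha1.1 v hvp
    have huhv : u <+: h v := prefix_of_both hu hpre (le_of_lt hv)
    refine ⟨v, hvp, lt_of_lt_of_le hum (hm' u (h v) huhv).length_le⟩

end Helper
end
noncomputable section
namespace Helper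
open Classical Cardinal

/-! ### Turing reducibility facts -/

lemma turingLe_refl (p : Baire) : TuringLe p p :=
  ⟨fun p => Part.some p, compPF_id, Part.mem_some p⟩

lemma turingLe_tupleComp (p : Baire) (i : ℕ) : TuringLe (tupleComp p i) p :=
  ⟨fun p => Part.some fun n => p (cpair i n),
    compPF_coord (primrec_cpair.comp (Primrec.const i) Primrec.id),
    Part.mem_some _⟩

lemma turingLe_trans {q s p : Baire} (h1 : TuringLe q s) (h2 : TuringLe s p) : TuringLe q p := by
  obtain ⟨F₁, hF₁, hq⟩ := h1
  obtain ⟨F₂, hF₂, hs⟩ := h2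
  exact ⟨fun p => (F₂ p).bind F₁, compPF_comp hF₂ hF₁, Part.mem_bind_iff.2 ⟨s, hs, hq⟩⟩

lemma countable_computable_words : Countable {h : List ℕ → List ℕ // Computable h} := by
  have key : ∀ hc : {h : List ℕ → List ℕ // Computable h},
      ∃ c : Nat.Partrec.Code, c.eval = fun n =>
        Part.bind (Encodable.decode (α := List ℕ) n) fun a =>
          (Part.some (hc.1 a)).map Encodable.encode := by
    intro hc
    exact Nat.Partrec.Code.exists_code.1 hc.2
  choose cd hcd using key
  have hinj : Function.Injective cd := by
    intro h₁ h₂ he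
    have : (fun n => Part.bind (Encodable.decode (α := List ℕ) n) fun a =>
        (Part.some (h₁.1 a)).map Encodable.encode) =
        fun n => Part.bind (Encodable.decode (α := List ℕ) n) fun a =>
        (Part.some (h₂.1 a)).map Encodable.encode := by
      rw [← hcd h₁, ← hcd h₂, he]
    have hv : ∀ a : List ℕ, h₁.1 a = h₂.1 a := by
      intro a
      have := congrFun this (Encodable.encode a)
      simp [Encodable.encodek] at this
      exact this
    exact Subtype.ext (funext hv)
  exact hinj.countable

lemma cone_countable (r : Baire) : {q' : Baire | TuringLe q' r}.Countable := by
  haveI := countable_computable_words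
  apply Set.Countable.mono _
    (Set.countable_range fun h : {h : List ℕ → List ℕ // Computable h} => hlim h.1 r)
  rintro q' ⟨F, ⟨h, hc, hm, ha⟩, hmem⟩
  have hd : (F r).Dom := Part.dom_iff_mem.2 ⟨q', hmem⟩
  have hget : (F r).get hd = q' := Part.get_eq_of_mem hmem hd
  have ha' := ha r hd
  exact ⟨⟨h, hc⟩, hlim_eq ha'.2 fun v hv => hget ▸ ha'.1 v hv⟩

/-! ### Cardinality facts -/

lemma aleph0_lt_mk_baire : ℵ₀ < #Baire := by
  have h1 : #Baire = ℵ₀ ^ (ℵ₀ : Cardinal) := by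
    rw [show (Baire : Type) = (ℕ → ℕ) from rfl, mk_arrow]
    simp
  rw [h1]
  exact cantor' ℵ₀ one_lt_aleph0

lemma exists_not_mem_of_mk_lt {s : Set Baire} (h : #s < #Baire) : ∃ x, x ∉ s := by
  by_contra hc
  push_neg at hc
  have : s = Set.univ := Set.eq_univ_of_forall hc
  rw [this, mk_univ] at h
  exact lt_irrefl _ h

lemma mk_lt_of_countable {s : Set Baire} (h : s.Countable) : #s < #Baire :=
  lt_of_le_of_lt (by rwa [Cardinal.mk_le_aleph0_iff, Set.countable_coe_iff])
    aleph0_lt_mk_baire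

/-! ### Constant-function codes -/

def qcode (y : Baire) : Baire := fun i =>
  cpair (Encodable.encode ([] : List ℕ)) (Encodable.encode (histN y i))

lemma wn_qcode (y : Baire) (i : ℕ) : wn (qcode y) i = [] := by
  unfold wn qcode
  rw [cunpair_cpair]
  exact Denumerable.ofNat_encode _

lemma wk_qcode (y : Baire) (i : ℕ) : wk (qcode y) i = histN y i := by
  unfold wk qcode
  rw [cunpair_cpair]
  exact Denumerable.ofNat_encode _

lemma mem_Phi_qcode (y p : Baire) : y ∈ Phi (qcode y) p := by
  have cons : ConsistentCode (qcode y) := by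
    intro i j _
    rcases le_total i j with hij | hij
    · exact Or.inl (by rw [wk_qcode, wk_qcode]; exact histN_prefix hij)
    · exact Or.inr (by rw [wk_qcode, wk_qcode]; exact histN_prefix hij)
  have dom2 : ∀ m : ℕ, ∃ i, IsPrefixOf (wn (qcode y) i) p ∧ m < (wk (qcode y) i).length := by
    intro m
    refine ⟨m + 1, ?_, ?_⟩
    · rw [wn_qcode]; exact isPrefixOf_nil p
    · rw [wk_qcode, length_histN]; omega
  have hdom : (Phi (qcode y) p).Dom := ⟨cons, dom2⟩
  have hy : ∀ i, IsPrefixOf (wn (qcode y) i) p → IsPrefixOf (wk (qcode y) i) y := by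
    intro i _
    rw [wk_qcode]
    exact isPrefixOf_histN y i
  have heps := Classical.epsilon_spec
    (p := fun x : Baire => ∀ i, IsPrefixOf (wn (qcode y) i) p → IsPrefixOf (wk (qcode y) i) x)
    ⟨y, hy⟩
  have hpre : IsPrefixOf (wn (qcode y) 0) p := by rw [wn_qcode]; exact isPrefixOf_nil p
  have hval : (Phi (qcode y) p).get hdom = y := by
    show Classical.epsilon _ = y
    funext n
    have h1 := heps (n + 1) (by rw [wn_qcode]; exact isPrefixOf_nil p)
    have h2 := hy (n + 1) (by rw [wn_qcode]; exact isPrefixOf_nil p)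
    rw [wk_qcode] at h1 h2
    exact agree_of_isPrefixOf h1 h2 (by rw [length_histN]; omega)
  have := Part.get_mem hdom
  rwa [hval] at this

/-! ### Realizer helper -/

lemma realizes_of_mem {F : Baire →. Baire} {f : Problem}
    (h : ∀ p, (f p).Nonempty → ∃ z, z ∈ F p ∧ z ∈ f p) : Realizes F f := by
  intro p hp
  obtain ⟨z, hz, hzf⟩ := h p hp
  exact ⟨Part.dom_iff_mem.2 ⟨z, hz⟩, by rwa [Part.get_eq_of_mem hz]⟩

end Helper
end
noncomputable section
namespace Helper
open Classical Cardinal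

/-! ### The requirement type and its cardinality -/

def zeroFn : Baire := fun _ => 0

def Req : Type := (List ℕ → List ℕ) ⊕ {D : Baire → Baire // Continuous D}

/-- A countable dense family in Baire space. -/
def efam (k : ℕ) : Baire := fun n => (word k).getD n 0

lemma dense_efam : Dense (Set.range efam) := by
  rw [dense_iff_inter_open]
  rintro U hU ⟨p, hp⟩
  obtain ⟨I, u, hIu, hsub⟩ := isOpen_pi_iff.1 hU p hp
  set N := I.sup id + 1 with hN
  set k := Encodable.encode (histN p N) with hk
  have hek : ∀ i < N, efam k i = p i := by
    intro i hi
    show (word (Encodable.encode (histN p N))).getD i 0 = p i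
    rw [show word (Encodable.encode (histN p N)) = histN p N from Denumerable.ofNat_encode _]
    exact histN_getD hi
  refine ⟨efam k, hsub ?_, ⟨k, rfl⟩⟩
  intro i hi
  have hiN : i < N := by
    have : i ≤ I.sup id := Finset.le_sup (f := id) hi
    omega
  rw [hek i hiN]
  exact (hIu i hi).2

lemma mk_cont_le : #{D : Baire → Baire // Continuous D} ≤ #Baire := by
  have hinj : Function.Injective
      (fun D : {D : Baire → Baire // Continuous D} => (fun k => D.1 (efam k) : ℕ → Baire)) := by
    intro D₁ D₂ he
    apply Subtype.ext
    apply Continuous.ext_on dense_efam D₁.2 D₂.2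
    rintro _ ⟨k, rfl⟩
    exact congrFun he k
  calc #{D : Baire → Baire // Continuous D} ≤ #(ℕ → Baire) := mk_le_of_injective hinj
    _ = #Baire := by
        apply mk_congr
        exact ((Equiv.curry ℕ ℕ ℕ).symm.trans
          (Equiv.arrowCongr (Denumerable.eqv (ℕ × ℕ)) (Equiv.refl ℕ)))

lemma mk_req_le : #Req ≤ #Baire := by
  have h1 : #(List ℕ → List ℕ) = #Baire :=
    mk_congr (Equiv.arrowCongr (Denumerable.eqv (List ℕ)) (Denumerable.eqv (List ℕ)))
  have h2 : #Req = #(List ℕ → List ℕ) + #{D : Baire → Baire // Continuous D} := by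
    rw [show Req = ((List ℕ → List ℕ) ⊕ {D : Baire → Baire // Continuous D}) from rfl,
      mk_sum, lift_id, lift_id]
  rw [h2, h1]
  calc #Baire + #{D : Baire → Baire // Continuous D} ≤ #Baire + #Baire :=
        add_le_add le_rfl mk_cont_le
    _ = #Baire := add_eq_self (le_of_lt aleph0_lt_mk_baire)

/-! ### A well-order on requirements with small initial segments -/

def rrel : Req → Req → Prop := (Cardinal.ord_eq Req).choose

instance rrel_wo : IsWellOrder Req rrel := (Cardinal.ord_eq Req).choose_spec.choose

lemma rrel_ord : Cardinal.ord #Req = Ordinal.type rrel :=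
  (Cardinal.ord_eq Req).choose_spec.choose_spec

lemma mk_seg_lt (x : Req) : #{y : Req // rrel y x} < #Baire := by
  have h1 : (Ordinal.typein rrel x).card < #Req :=
    Cardinal.card_typein_lt (r := rrel) x rrel_ord
  exact lt_of_lt_of_le (lt_of_le_of_lt (le_of_eq (Ordinal.card_typein x)) h1) mk_req_le

end Helper
end
noncomputable section
namespace Helper
open Classical Cardinal

/-! ### The transfinite construction -/

abbrev St : Type := Baire × Baire × Set Baire

def AvoidS (x : Req) (prev : {y : Req // rrel y x} → St) : Set Baire :=
  Set.range (fun y => (prev y).1) ∪ ⋃ y, (prev y).2.2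

def ValsS (x : Req) (prev : {y : Req // rrel y x} → St) : Set Baire :=
  Set.range (fun y => (prev y).2.1) ∪ {zeroFn}

def SpecS : (x : Req) → ({y : Req // rrel y x} → St) → St → Prop
  | Sum.inl h, prev, s =>
      (Good h → s.1 ∉ AvoidS (Sum.inl h) prev ∧ s.2.1 = hlim h s.1 ∧ s.2.2 = ∅) ∧
      (¬ Good h → s = (zeroFn, zeroFn, ∅))
  | Sum.inr D, prev, s =>
      s.1 = zeroFn ∧ s.2.1 ∉ ValsS (Sum.inr D) prev ∧
      s.2.2 = {q' | TuringLe q' (D.1 (qcode s.2.1))}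

def G : Req → St :=
  (IsWellFounded.wf (r := rrel)).fix fun x ih =>
    Classical.epsilon (SpecS x fun y : {y : Req // rrel y x} => ih y.1 y.2)

lemma G_eq (x : Req) :
    G x = Classical.epsilon (SpecS x fun y : {y : Req // rrel y x} => G y.1) :=
  WellFounded.fix_eq _ _ x

lemma spec_prot_countable {x : Req} {prev : {y : Req // rrel y x} → St} {s : St}
    (hs : SpecS x prev s) : s.2.2.Countable := by
  match x with
  | Sum.inl h =>
    by_cases hg : Good h
    · rw [(hs.1 hg).2.2]; exact Set.countable_empty
    · rw [hs.2 hg]; exact Set.countable_empty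
  | Sum.inr D =>
    rw [hs.2.2]; exact cone_countable _

lemma G_spec : ∀ x : Req, SpecS x (fun y : {y : Req // rrel y x} => G y.1) (G x) := by
  intro x
  induction x using (IsWellFounded.wf (r := rrel)).induction with
  | _ x IH =>
    rw [G_eq]
    apply Classical.epsilon_spec (p := SpecS x fun y : {y : Req // rrel y x} => G y.1)
    -- existence of a witness
    have hseg : #{y : Req // rrel y x} < #Baire := mk_seg_lt x
    have hAvoid : #(AvoidS x fun y : {y : Req // rrel y x} => G y.1) < #Baire := by
      apply lt_of_le_of_lt (mk_union_le _ _)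
      apply add_lt_of_lt (le_of_lt aleph0_lt_mk_baire)
      · exact lt_of_le_of_lt mk_range_le hseg
      · apply lt_of_le_of_lt mk_iUnion_le_sum_mk
        have hb : ∀ y : {y : Req // rrel y x}, #((G y.1).2.2) ≤ ℵ₀ := by
          intro y
          rw [Cardinal.mk_le_aleph0_iff, Set.countable_coe_iff]
          exact spec_prot_countable (IH y.1 y.2)
        apply lt_of_le_of_lt (Cardinal.sum_le_sum _ (fun _ => ℵ₀) hb)
        rw [Cardinal.sum_const']
        exact mul_lt_of_lt (le_of_lt aleph0_lt_mk_baire) hseg aleph0_lt_mk_baire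
    have hVals : #(ValsS x fun y : {y : Req // rrel y x} => G y.1) < #Baire := by
      apply lt_of_le_of_lt (mk_union_le _ _)
      apply add_lt_of_lt (le_of_lt aleph0_lt_mk_baire)
      · exact lt_of_le_of_lt mk_range_le hseg
      · rw [mk_singleton]
        exact lt_trans one_lt_aleph0 aleph0_lt_mk_baire
    match x with
    | Sum.inl h =>
      by_cases hg : Good h
      · obtain ⟨p, hp⟩ := exists_not_mem_of_mk_lt hAvoid
        exact ⟨(p, hlim h p, ∅), fun _ => ⟨hp, rfl, rfl⟩, fun hng => absurd hg hng⟩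
      · exact ⟨(zeroFn, zeroFn, ∅), fun hgg => absurd hgg hg, fun _ => rfl⟩
    | Sum.inr D =>
      obtain ⟨y₀, hy₀⟩ := exists_not_mem_of_mk_lt hVals
      exact ⟨(zeroFn, y₀, {q' | TuringLe q' (D.1 (qcode y₀))}), rfl, hy₀, rfl⟩

def Acted (x : Req) : Prop := ∃ h, x = Sum.inl h ∧ Good h

lemma acted_spec {h : List ℕ → List ℕ} (hg : Good h) :
    (G (Sum.inl h)).1 ∉ AvoidS (Sum.inl h) (fun y : {y : Req // rrel y (Sum.inl h)} => G y.1) ∧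
    (G (Sum.inl h)).2.1 = hlim h (G (Sum.inl h)).1 ∧ (G (Sum.inl h)).2.2 = ∅ :=
  (G_spec (Sum.inl h)).1 hg

lemma acted_notin_avoid {x : Req} (hx : Acted x) :
    (G x).1 ∉ AvoidS x (fun y : {y : Req // rrel y x} => G y.1) := by
  obtain ⟨h, rfl, hg⟩ := hx
  exact (acted_spec hg).1

lemma acted_val {x : Req} (hx : Acted x) : ∃ h, x = Sum.inl h ∧ Good h ∧
    (G x).2.1 = hlim h (G x).1 := by
  obtain ⟨h, rfl, hg⟩ := hx
  exact ⟨h, rfl, hg, (acted_spec hg).2.1⟩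

lemma pts_inj {x₁ x₂ : Req} (h1 : Acted x₁) (h2 : Acted x₂) (hne : x₁ ≠ x₂) :
    (G x₁).1 ≠ (G x₂).1 := by
  rcases trichotomous (r := rrel) x₁ x₂ with hr | he | hr
  · intro heq
    exact acted_notin_avoid h2 (Set.mem_union_left _ ⟨⟨x₁, hr⟩, heq⟩)
  · exact absurd he hne
  · intro heq
    exact acted_notin_avoid h1 (Set.mem_union_left _ ⟨⟨x₂, hr⟩, heq.symm⟩)

def cfun : Baire → Baire := fun p =>
  if hx : ∃ x, Acted x ∧ (G x).1 = p then (G hx.choose).2.1 else zeroFn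

lemma cfun_acted {x : Req} (hx : Acted x) : cfun ((G x).1) = (G x).2.1 := by
  have hex : ∃ x', Acted x' ∧ (G x').1 = (G x).1 := ⟨x, hx, rfl⟩
  rw [cfun, dif_pos hex]
  obtain ⟨hax', hpt'⟩ := hex.choose_spec
  by_cases hxx : hex.choose = x
  · rw [hxx]
  · exact absurd hpt' (pts_inj hax' hx hxx)

lemma cfun_notacted {q : Baire} (hq : ∀ x, Acted x → (G x).1 ≠ q) : cfun q = zeroFn := by
  rw [cfun, dif_neg]
  rintro ⟨x, hx, hpt⟩
  exact hq x hx hpt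

/-! ### The problem `fP` -/

def fP : Problem := fun p => {x | ∀ q', TuringLe q' p → x ≠ cfun q'}

lemma fP_total (p : Baire) : (fP p).Nonempty := by
  have hc : (cfun '' {q' | TuringLe q' p}).Countable := (cone_countable p).image cfun
  obtain ⟨x, hx⟩ := exists_not_mem_of_mk_lt (mk_lt_of_countable hc)
  exact ⟨x, fun q' hq' hxe => hx ⟨q', hq', hxe.symm⟩⟩

lemma fP_mono {p s : Baire} (hsp : TuringLe s p) {x : Baire} (hx : x ∈ fP p) : x ∈ fP s :=
  fun q' hq' => hx q' (turingLe_trans hq' hsp)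

end Helper
end
noncomputable section
namespace Helper
open Classical Cardinal

/-! ### Verification -/

lemma bpair_odd (q p : Baire) (k : ℕ) : bpair q p (2 * k + 1) = p k := by
  unfold bpair
  rw [if_neg (by omega)]
  congr 1
  omega

lemma par_total (p : Baire) : (Parallelization fP p).Nonempty := by
  refine ⟨fun m => (fP_total (tupleComp p (cunpair m).1)).some ((cunpair m).2), ?_⟩
  intro i
  have he : tupleComp (fun m => (fP_total (tupleComp p (cunpair m).1)).some ((cunpair m).2)) i
      = (fP_total (tupleComp p i)).some := by
    funext n
    show (fP_total (tupleComp p (cunpair (cpair i n)).1)).some ((cunpair (cpair i n)).2) = _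
    rw [cunpair_cpair]
  rw [he]
  exact (fP_total (tupleComp p i)).some_mem

lemma red1 : WeihrauchRed fP (Parallelization fP) := by
  refine ⟨fun r => Part.some fun m => r (2 * cpair 0 m + 1),
    fun p => Part.some fun m => p (csnd m),
    compPF_coord (Primrec.succ.comp (Primrec.nat_mul.comp (Primrec.const 2)
      (primrec_cpair.comp (Primrec.const 0) Primrec.id))),
    compPF_coord primrec_csnd, ?_⟩
  intro G hG
  apply realizes_of_mem
  intro p _
  set s : Baire := fun m => p (csnd m) with hs
  have hts : ∀ i, tupleComp s i = p := by
    intro i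
    funext n
    show p (csnd (cpair i n)) = p n
    rw [csnd_cpair]
  obtain ⟨hd, hmem⟩ := hG s (par_total s)
  set t := (G s).get hd with ht
  have hcol : tupleComp t 0 ∈ fP p := by
    have := hmem 0
    rwa [hts 0] at this
  refine ⟨fun m => bpair p t (2 * cpair 0 m + 1), ?_, ?_⟩
  · exact Part.mem_bind_iff.2 ⟨s, Part.mem_some _,
      Part.mem_bind_iff.2 ⟨t, Part.get_mem hd, Part.mem_some _⟩⟩
  · have he : (fun m => bpair p t (2 * cpair 0 m + 1)) = tupleComp t 0 := by
      funext m
      rw [bpair_odd]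
      rfl
    rw [he]
    exact hcol

lemma red2 : WeihrauchRed (Parallelization fP) fP := by
  refine ⟨fun r => Part.some fun m => r (2 * csnd m + 1),
    fun p => Part.some p,
    compPF_coord (Primrec.succ.comp (Primrec.nat_mul.comp (Primrec.const 2) primrec_csnd)),
    compPF_id, ?_⟩
  intro G hG
  apply realizes_of_mem
  intro p _
  obtain ⟨hd, hmem⟩ := hG p (fP_total p)
  set t := (G p).get hd with ht
  refine ⟨fun m => bpair p t (2 * csnd m + 1), ?_, ?_⟩
  · exact Part.mem_bind_iff.2 ⟨p, Part.mem_some _,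
      Part.mem_bind_iff.2 ⟨t, Part.get_mem hd, Part.mem_some _⟩⟩
  · show ∀ _, _
    intro i
    have he : tupleComp (fun m => bpair p t (2 * csnd m + 1)) i = t := by
      funext n
      show bpair p t (2 * csnd (cpair i n) + 1) = t n
      rw [bpair_odd, csnd_cpair]
    rw [he]
    exact fP_mono (turingLe_tupleComp p i) hmem

lemma not_cont : ¬ ContinuousProblem fP := by
  rintro ⟨F, ⟨h, _, happ⟩, hreal⟩
  have hdall : ∀ p, (F p).Dom := fun p => (hreal p (fP_total p)).1
  have hg : Good h := fun p m => (happ p (hdall p)).2 m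
  have hact : Acted (Sum.inl h) := ⟨h, rfl, hg⟩
  have hval : (G (Sum.inl h)).2.1 = hlim h (G (Sum.inl h)).1 := (acted_spec hg).2.1
  obtain ⟨hd, hmem⟩ := hreal (G (Sum.inl h)).1 (fP_total _)
  have hlimF : hlim h (G (Sum.inl h)).1 = (F (G (Sum.inl h)).1).get hd :=
    hlim_eq (happ _ hd).2 (happ _ hd).1
  have hcf : cfun (G (Sum.inl h)).1 = (F (G (Sum.inl h)).1).get hd := by
    rw [cfun_acted hact, hval, hlimF]
  exact hmem _ (turingLe_refl _) hcf.symm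

lemma not_eff : ¬ EffectivelyDiscontinuous fP := by
  rintro ⟨D, hD, hdisc⟩
  set x : Req := Sum.inr ⟨D, hD⟩ with hx
  have hspec := G_spec x
  obtain ⟨hpt, hval_nin, hprot⟩ := hspec
  set y₀ := (G x).2.1 with hy₀
  have claim : ∀ q', TuringLe q' (D (qcode y₀)) → y₀ ≠ cfun q' := by
    intro q' hq' heq
    by_cases hex : ∃ x', Acted x' ∧ (G x').1 = q'
    · obtain ⟨x', hax', hpt'⟩ := hex
      have hc : cfun q' = (G x').2.1 := by rw [← hpt']; exact cfun_acted hax'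
      rcases trichotomous (r := rrel) x' x with hr | he | hr
      · apply hval_nin
        apply Set.mem_union_left
        refine ⟨⟨x', hr⟩, ?_⟩
        show (G x').2.1 = y₀
        rw [← hc]
        exact heq.symm
      · obtain ⟨h', he', _⟩ := hax'
        rw [he] at he'
        simp [hx] at he'
      · apply acted_notin_avoid hax'
        apply Set.mem_union_right
        apply Set.mem_iUnion.2
        refine ⟨⟨x, hr⟩, ?_⟩
        show (G x').1 ∈ (G x).2.2
        rw [hpt', hprot]
        exact hq'
    · push_neg at hex
      have hz : cfun q' = zeroFn := cfun_notacted hex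
      apply hval_nin
      apply Set.mem_union_right
      exact Set.mem_singleton_iff.2 (heq.trans hz)
  have hy₀f : y₀ ∈ fP (D (qcode y₀)) := fun q' hq' => claim q' hq'
  exact (hdisc (qcode y₀)).2 y₀ (mem_Phi_qcode y₀ (D (qcode y₀))) hy₀f

end Helper
end

/-- There exists a total parallelizable problem that is discontinuous but not
effectively discontinuous. -/
theorem exists_total_parallelizable_discontinuous_not_effectively :
    ∃ f : Problem, (∀ p : Baire, (f p).Nonempty) ∧
      WeihrauchRed f (Parallelization f) ∧ WeihrauchRed (Parallelization f) f ∧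
      ¬ ContinuousProblem f ∧ ¬ EffectivelyDiscontinuous f := by
  exact ⟨Helper.fP, Helper.fP_total, Helper.red1, Helper.red2, Helper.not_cont, Helper.not_eff⟩
end

section
/- Every partial single-valued function g :⊆ ℕ^ℕ → ℕ^ℕ, regarded as the problem f with dom(f) = dom(g) and f(p) := {g(p)}, is either continuous or effectively discontinuous. -/
section SVAux

attribute [local instance] Classical.propDecidable

/-- Total version of the value of a partial function (junk value `0` off the domain). -/
noncomputable def gval (g : Baire →. Baire) (p : Baire) : Baire :=
  if h : (g p).Dom then (g p).get h else fun _ => 0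

lemma mem_iff_gval {g : Baire →. Baire} {p y : Baire} :
    y ∈ g p ↔ (g p).Dom ∧ y = gval g p := by
  constructor
  · intro hy
    have hd : (g p).Dom := Part.dom_iff_mem.mpr ⟨y, hy⟩
    refine ⟨hd, ?_⟩
    rw [gval, dif_pos hd]
    exact Part.mem_unique hy (Part.get_mem hd)
  · rintro ⟨hd, rfl⟩
    rw [gval, dif_pos hd]
    exact Part.get_mem hd

lemma isPrefixOf_iff {l : List ℕ} {p : Baire} :
    IsPrefixOf l p ↔ ∀ j, j < l.length → l.getD j 0 = p j := by
  constructor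
  · intro h j hj
    conv_lhs => rw [h]
    rw [List.getD_eq_getElem _ _ (by simpa using hj)]
    simp
  · intro h
    refine List.ext_getElem (by simp) ?_
    intro n h1 h2
    have hn := h n h1
    rw [List.getD_eq_getElem _ _ h1] at hn
    simp [hn]

lemma getD_range_map (p : Baire) {K j : ℕ} (h : j < K) :
    ((List.range K).map p).getD j 0 = p j := by
  rw [List.getD_eq_getElem _ _ (by simpa using h)]
  simp

lemma isPrefixOf_range_map (p : Baire) (n : ℕ) :
    IsPrefixOf ((List.range n).map p) p := by
  simp [IsPrefixOf]

lemma prefix_getD {u v : List ℕ} (h : u <+: v) {j : ℕ} (hj : j < u.length) :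
    u.getD j 0 = v.getD j 0 := by
  obtain ⟨t, rfl⟩ := h
  rw [List.getD_eq_getElem _ _ hj,
    List.getD_eq_getElem _ _ (lt_of_lt_of_le hj (by simp))]
  exact (List.getElem_append_left hj).symm

lemma isPrefixOf_mono {u v : List ℕ} {p : Baire} (huv : u <+: v)
    (h : IsPrefixOf v p) : IsPrefixOf u p := by
  rw [isPrefixOf_iff] at h ⊢
  intro j hj
  rw [prefix_getD huv hj]
  exact h j (lt_of_lt_of_le hj huv.length_le)

lemma isPrefixOf_of_agree {l : List ℕ} {p p' : Baire} (h : IsPrefixOf l p)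
    (hag : ∀ j < l.length, p' j = p j) : IsPrefixOf l p' := by
  rw [isPrefixOf_iff] at h ⊢
  intro j hj
  rw [hag j hj]
  exact h j hj

lemma comparable_getD {u v : List ℕ} (h : WordComparable u v) {j : ℕ}
    (hu : j < u.length) (hv : j < v.length) : u.getD j 0 = v.getD j 0 := by
  rcases h with h | h
  · exact prefix_getD h hu
  · exact (prefix_getD h hv).symm

lemma prefix_of_prefixOf_le {u v : List ℕ} {p : Baire} (hu : IsPrefixOf u p)
    (hv : IsPrefixOf v p) (h : u.length ≤ v.length) : u <+: v := by
  rw [List.prefix_iff_eq_take]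
  refine List.ext_getElem (by simp [h]) ?_
  intro n h1 h2
  have hu' := (isPrefixOf_iff.mp hu) n h1
  have hv' := (isPrefixOf_iff.mp hv) n (lt_of_lt_of_le h1 h)
  rw [List.getD_eq_getElem _ _ h1] at hu'
  rw [List.getD_eq_getElem _ _ (lt_of_lt_of_le h1 h)] at hv'
  rw [List.getElem_take, hu']
  exact hv'.symm

lemma comparable_of_prefixOf {u v : List ℕ} {p : Baire} (hu : IsPrefixOf u p)
    (hv : IsPrefixOf v p) : WordComparable u v := by
  rcases le_total u.length v.length with h | h
  · exact Or.inl (prefix_of_prefixOf_le hu hv h)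
  · exact Or.inr (prefix_of_prefixOf_le hv hu h)

lemma phi_out {q p y : Baire} (hy : y ∈ Phi q p) :
    (∀ i, IsPrefixOf (wn q i) p → IsPrefixOf (wk q i) y) ∧ ConsistentCode q ∧
      (∀ m, ∃ i, IsPrefixOf (wn q i) p ∧ m < (wk q i).length) := by
  obtain ⟨⟨hc, hu⟩, rfl⟩ := hy
  refine ⟨?_, hc, hu⟩
  have hex : ∃ x : Baire, ∀ i, IsPrefixOf (wn q i) p → IsPrefixOf (wk q i) x := by
    refine ⟨fun j => (wk q (Classical.choose (hu j))).getD j 0, ?_⟩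
    intro i hi
    rw [isPrefixOf_iff]
    intro j hj
    have hsp := Classical.choose_spec (hu j)
    have hcomp : WordComparable (wk q i) (wk q (Classical.choose (hu j))) :=
      hc i _ (comparable_of_prefixOf hi hsp.1)
    exact comparable_getD hcomp hj hsp.2
  exact Classical.epsilon_spec hex

/-! ### The continuous side -/

variable (g : Baire →. Baire)

/-- Some element of the domain of `g` extends `v`. -/
def AneP (v : List ℕ) : Prop := ∃ p, (g p).Dom ∧ IsPrefixOf v p

noncomputable def pvt (v : List ℕ) : Baire :=
  if h : AneP g v then Classical.choose h else fun _ => 0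

def PnP (v : List ℕ) (n : ℕ) : Prop :=
  ∀ p, (g p).Dom → IsPrefixOf v p → ∀ j < n, gval g p j = gval g (pvt g v) j

noncomputable def nvt (v : List ℕ) : ℕ := Nat.findGreatest (PnP g v) v.length

noncomputable def tvt (v : List ℕ) : ℕ :=
  Nat.findGreatest (fun t => AneP g (v.take t)) v.length

noncomputable def hfun (v : List ℕ) : List ℕ :=
  (List.range (nvt g (v.take (tvt g v)))).map (gval g (pvt g (v.take (tvt g v))))

lemma AneP_mono {u v : List ℕ} (huv : u <+: v) (h : AneP g v) : AneP g u := by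
  obtain ⟨p, hd, hp⟩ := h
  exact ⟨p, hd, isPrefixOf_mono huv hp⟩

lemma AneP_bar (hE : AneP g []) (v : List ℕ) : AneP g (v.take (tvt g v)) := by
  rw [tvt]
  exact Nat.findGreatest_spec (P := fun t => AneP g (v.take t)) (m := 0) (Nat.zero_le _)
    (by simpa using hE)

lemma pvt_spec {v : List ℕ} (h : AneP g v) :
    (g (pvt g v)).Dom ∧ IsPrefixOf v (pvt g v) := by
  rw [pvt, dif_pos h]
  exact Classical.choose_spec h

lemma PnP_spec (v : List ℕ) : PnP g v (nvt g v) := by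
  rw [nvt]
  exact Nat.findGreatest_spec (P := PnP g v) (m := 0) (Nat.zero_le _)
    (fun _ _ _ j hj => absurd hj (Nat.not_lt_zero j))

lemma take_mono_prefix {v : List ℕ} {a b : ℕ} (h : a ≤ b) :
    v.take a <+: v.take b := by
  have h2 : (v.take b).take a = v.take a := by
    rw [List.take_take, min_eq_left h]
  rw [← h2]
  exact List.take_prefix _ _

lemma range_map_prefix (f : Baire) {a b : ℕ} (h : a ≤ b) :
    (List.range a).map f <+: (List.range b).map f := by
  have h1 : List.range a <+: List.range b := by
    have := List.take_prefix a (List.range b)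
    rwa [List.take_range, min_eq_left h] at this
  exact h1.map f

lemma hfun_mono : MonotoneWord (hfun g) := by
  intro u v huv
  by_cases hE : AneP g []
  · have htu_le : tvt g u ≤ u.length := Nat.findGreatest_le _
    have hAu : AneP g (u.take (tvt g u)) := AneP_bar g hE u
    have hutake : u.take (tvt g u) = v.take (tvt g u) := by
      obtain ⟨t, rfl⟩ := huv
      exact (List.take_append_of_le_length htu_le).symm
    have htuv : tvt g u ≤ tvt g v :=
      Nat.le_findGreatest (le_trans htu_le huv.length_le) (by rw [← hutake]; exact hAu)
    have hbar : u.take (tvt g u) <+: v.take (tvt g v) := by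
      rw [hutake]
      exact take_mono_prefix htuv
    have hAv : AneP g (v.take (tvt g v)) := AneP_bar g hE v
    have hpv := pvt_spec g hAv
    have hpvub : IsPrefixOf (u.take (tvt g u)) (pvt g (v.take (tvt g v))) :=
      isPrefixOf_mono hbar hpv.2
    have hPn_u := PnP_spec g (u.take (tvt g u))
    have hn_le : nvt g (u.take (tvt g u)) ≤ nvt g (v.take (tvt g v)) := by
      apply Nat.le_findGreatest (le_trans (Nat.findGreatest_le _) hbar.length_le)
      intro p hd hp j hj
      have h1 := hPn_u p hd (isPrefixOf_mono hbar hp) j hj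
      have h2 := hPn_u (pvt g (v.take (tvt g v))) hpv.1 hpvub j hj
      rw [h1, ← h2]
    have heq : hfun g u =
        (List.range (nvt g (u.take (tvt g u)))).map (gval g (pvt g (v.take (tvt g v)))) := by
      rw [hfun]
      refine List.ext_getElem (by simp) ?_
      intro n h1 h2
      simp only [List.getElem_map, List.getElem_range]
      exact (hPn_u (pvt g (v.take (tvt g v))) hpv.1 hpvub n (by simpa using h1)).symm
    rw [heq, hfun]
    exact range_map_prefix _ hn_le
  · have h0 : ∀ w : List ℕ, tvt g w = 0 := by
      intro w
      rw [tvt, Nat.findGreatest_eq_zero_iff]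
      intro n _ _ hP
      exact hE (AneP_mono g List.nil_prefix hP)
    have heq : hfun g u = hfun g v := by
      rw [hfun, hfun, h0 u, h0 v, List.take_zero, List.take_zero]
    rw [heq]

lemma hfun_approx
    (hC : ∀ p, (g p).Dom → ∀ m, ∃ k, ∀ p', (g p').Dom → (∀ j < k, p' j = p j) →
      ∀ j < m, gval g p' j = gval g p j) :
    Approximates (hfun g) g := by
  intro p hp
  have key : ∀ v : List ℕ, IsPrefixOf v p →
      hfun g v = (List.range (nvt g v)).map (gval g p) := by
    intro v hv
    have hA : AneP g v := ⟨p, hp, hv⟩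
    have ht : tvt g v = v.length :=
      le_antisymm (Nat.findGreatest_le _)
        (Nat.le_findGreatest le_rfl (by rw [List.take_length]; exact hA))
    have hvb : v.take (tvt g v) = v := by rw [ht, List.take_length]
    rw [hfun, hvb]
    refine List.ext_getElem (by simp) ?_
    intro n h1 h2
    simp only [List.getElem_map, List.getElem_range]
    exact (PnP_spec g v p hp hv n (by simpa using h1)).symm
  constructor
  · intro v hv
    rw [key v hv]
    have hgv : gval g p = (g p).get hp := by rw [gval, dif_pos hp]
    rw [← hgv]
    exact isPrefixOf_range_map _ _
  · intro m
    obtain ⟨k, hk⟩ := hC p hp (m + 1)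
    refine ⟨(List.range (max k (m + 1))).map p, isPrefixOf_range_map p _, ?_⟩
    rw [key _ (isPrefixOf_range_map p _)]
    simp only [List.length_map, List.length_range]
    have hA : AneP g ((List.range (max k (m + 1))).map p) :=
      ⟨p, hp, isPrefixOf_range_map p _⟩
    have hpv := pvt_spec g hA
    have hagpv : ∀ j < max k (m + 1), pvt g ((List.range (max k (m + 1))).map p) j = p j := by
      intro j hj
      have := isPrefixOf_iff.mp hpv.2 j (by simpa using hj)
      rw [getD_range_map p hj] at this
      exact this.symm
    have hle : m + 1 ≤ nvt g ((List.range (max k (m + 1))).map p) := by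
      apply Nat.le_findGreatest (by simp)
      intro p' hd' hp' j hj
      have hag' : ∀ j2 < max k (m + 1), p' j2 = p j2 := by
        intro j2 hj2
        have := isPrefixOf_iff.mp hp' j2 (by simpa using hj2)
        rw [getD_range_map p hj2] at this
        exact this.symm
      have e1 := hk p' hd' (fun j2 hj2 => hag' j2 (lt_of_lt_of_le hj2 (le_max_left _ _))) j hj
      have e2 := hk _ hpv.1 (fun j2 hj2 => hagpv j2 (lt_of_lt_of_le hj2 (le_max_left _ _))) j hj
      rw [e1, ← e2]
    omega

lemma continuous_side
    (hC : ∀ p, (g p).Dom → ∀ m, ∃ k, ∀ p', (g p').Dom → (∀ j < k, p' j = p j) →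
      ∀ j < m, gval g p' j = gval g p j) :
    ContinuousProblem (fun p => {y | y ∈ g p}) := by
  refine ⟨g, ⟨hfun g, hfun_mono g, hfun_approx g hC⟩, ?_⟩
  rintro p ⟨y, hy⟩
  have hd : (g p).Dom := Part.dom_iff_mem.mpr ⟨y, hy⟩
  exact ⟨hd, Part.get_mem hd⟩

/-! ### The effectively discontinuous side -/

noncomputable def Dfun (p₀ : Baire) (m : ℕ) (P' : ℕ → Baire) (w₀ : Baire) : Baire → Baire :=
  fun q =>
    if h : ∃ i, IsPrefixOf (wn q i) p₀ ∧ m ≤ (wk q i).length then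
      if ∀ j < m, (wk q (Nat.find h)).getD j 0 = w₀ j then
        P' (max (wn q (Nat.find h)).length (Nat.find h + 1))
      else p₀
    else p₀

lemma wn_congr {q q' : Baire} {i : ℕ} (h : q' i = q i) : wn q' i = wn q i := by
  simp [wn, h]

lemma wk_congr {q q' : Baire} {i : ℕ} (h : q' i = q i) : wk q' i = wk q i := by
  simp [wk, h]

lemma cylinder_open (q : Baire) (N : ℕ) : IsOpen {q' : Baire | ∀ i < N, q' i = q i} := by
  have heq : {q' : Baire | ∀ i < N, q' i = q i} =
      ⋂ i ∈ Finset.range N, {q' : Baire | q' i = q i} := by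
    ext q'
    simp [Finset.mem_range]
  rw [heq]
  refine isOpen_biInter_finset fun i _ => ?_
  exact IsOpen.preimage (continuous_apply (A := fun _ : ℕ => ℕ) i)
    (isOpen_discrete ({q i} : Set ℕ))

lemma Dfun_cont (p₀ : Baire) (m : ℕ) (P' : ℕ → Baire) (w₀ : Baire)
    (hP' : ∀ k, ∀ j < k, P' k j = p₀ j) : Continuous (Dfun p₀ m P' w₀) := by
  apply continuous_pi
  intro n
  apply IsLocallyConstant.continuous
  rw [IsLocallyConstant.iff_exists_open]
  intro q
  by_cases hq : ∃ i, IsPrefixOf (wn q i) p₀ ∧ m ≤ (wk q i).length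
  · refine ⟨{q' | ∀ i < Nat.find hq + 1, q' i = q i}, cylinder_open q _, fun i _ => rfl, ?_⟩
    intro q' hq'
    have hsamen : ∀ i ≤ Nat.find hq, wn q' i = wn q i := fun i hi =>
      wn_congr (hq' i (Nat.lt_succ_of_le hi))
    have hsamek : ∀ i ≤ Nat.find hq, wk q' i = wk q i := fun i hi =>
      wk_congr (hq' i (Nat.lt_succ_of_le hi))
    have hq'' : ∃ i, IsPrefixOf (wn q' i) p₀ ∧ m ≤ (wk q' i).length := by
      refine ⟨Nat.find hq, ?_⟩
      rw [hsamen _ le_rfl, hsamek _ le_rfl]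
      exact Nat.find_spec hq
    have hfind : Nat.find hq'' = Nat.find hq := by
      rw [Nat.find_eq_iff]
      constructor
      · rw [hsamen _ le_rfl, hsamek _ le_rfl]
        exact Nat.find_spec hq
      · intro i hi
        rw [hsamen i (le_of_lt hi), hsamek i (le_of_lt hi)]
        exact Nat.find_min hq hi
    have hDeq : Dfun p₀ m P' w₀ q' = Dfun p₀ m P' w₀ q := by
      simp only [Dfun]
      rw [dif_pos hq'', dif_pos hq, hfind, hsamen _ le_rfl, hsamek _ le_rfl]
    rw [hDeq]
  · refine ⟨{q' | ∀ i < n + 1, q' i = q i}, cylinder_open q _, fun i _ => rfl, ?_⟩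
    intro q' hq'
    have hDq : Dfun p₀ m P' w₀ q = p₀ := by
      simp only [Dfun]
      rw [dif_neg hq]
    by_cases hq'' : ∃ i, IsPrefixOf (wn q' i) p₀ ∧ m ≤ (wk q' i).length
    · have hge : n + 1 ≤ Nat.find hq'' := by
        by_contra hlt
        push_neg at hlt
        have hfi := Nat.find_spec hq''
        rw [wn_congr (hq' _ hlt), wk_congr (hq' _ hlt)] at hfi
        exact hq ⟨Nat.find hq'', hfi⟩
      have hDq' : Dfun p₀ m P' w₀ q' n = p₀ n := by
        simp only [Dfun]
        rw [dif_pos hq'']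
        by_cases hcnd : ∀ j < m, (wk q' (Nat.find hq'')).getD j 0 = w₀ j
        · rw [if_pos hcnd]
          exact hP' _ n (lt_of_lt_of_le (by omega) (le_max_right _ _))
        · rw [if_neg hcnd]
      rw [hDq', hDq]
    · have hDq' : Dfun p₀ m P' w₀ q' = p₀ := by
        simp only [Dfun]
        rw [dif_neg hq'']
      rw [hDq', hDq]

lemma Dfun_disc (p₀ : Baire) (hp₀ : (g p₀).Dom) (m : ℕ) (hm : 0 < m) (P' : ℕ → Baire)
    (hP'dom : ∀ k, (g (P' k)).Dom) (hP'ag : ∀ k, ∀ j < k, P' k j = p₀ j)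
    (hP'ne : ∀ k, ∃ j < m, gval g (P' k) j ≠ gval g p₀ j) :
    DiscontinuityFunction (Dfun p₀ m P' (gval g p₀)) (fun p => {y | y ∈ g p}) := by
  intro q
  have hDdom : (g (Dfun p₀ m P' (gval g p₀) q)).Dom := by
    simp only [Dfun]
    split_ifs
    · exact hP'dom _
    · exact hp₀
    · exact hp₀
  constructor
  · exact ⟨_, Part.get_mem hDdom⟩
  · intro y hy hymem
    obtain ⟨hspec, hc, hu⟩ := phi_out hy
    have hyval : y = gval g (Dfun p₀ m P' (gval g p₀) q) := (mem_iff_gval.mp hymem).2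
    by_cases h : ∃ i, IsPrefixOf (wn q i) p₀ ∧ m ≤ (wk q i).length
    · have hi₀ := Nat.find_spec h
      have hDcases : Dfun p₀ m P' (gval g p₀) q =
          (if ∀ j < m, (wk q (Nat.find h)).getD j 0 = gval g p₀ j then
            P' (max (wn q (Nat.find h)).length (Nat.find h + 1)) else p₀) := by
        simp only [Dfun]
        rw [dif_pos h]
      have hpref : IsPrefixOf (wn q (Nat.find h)) (Dfun p₀ m P' (gval g p₀) q) := by
        rw [hDcases]
        by_cases hcnd : ∀ j < m, (wk q (Nat.find h)).getD j 0 = gval g p₀ j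
        · rw [if_pos hcnd]
          exact isPrefixOf_of_agree hi₀.1
            (fun j hj => hP'ag _ j (lt_of_lt_of_le hj (le_max_left _ _)))
        · rw [if_neg hcnd]
          exact hi₀.1
      have hky := hspec (Nat.find h) hpref
      have hyj : ∀ j < m, y j = (wk q (Nat.find h)).getD j 0 := fun j hj =>
        ((isPrefixOf_iff.mp hky) j (lt_of_lt_of_le hj hi₀.2)).symm
      by_cases hcnd : ∀ j < m, (wk q (Nat.find h)).getD j 0 = gval g p₀ j
      · obtain ⟨j, hjm, hne⟩ := hP'ne (max (wn q (Nat.find h)).length (Nat.find h + 1))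
        apply hne
        have hD : Dfun p₀ m P' (gval g p₀) q =
            P' (max (wn q (Nat.find h)).length (Nat.find h + 1)) := by
          rw [hDcases, if_pos hcnd]
        have h2 : y = gval g (P' (max (wn q (Nat.find h)).length (Nat.find h + 1))) := by
          rw [hyval, hD]
        rw [← h2]
        exact (hyj j hjm).trans (hcnd j hjm)
      · have hD : Dfun p₀ m P' (gval g p₀) q = p₀ := by
          rw [hDcases, if_neg hcnd]
        push_neg at hcnd
        obtain ⟨j, hjm, hne⟩ := hcnd
        apply hne
        have h2 : y = gval g p₀ := by rw [hyval, hD]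
        rw [← h2]
        exact (hyj j hjm).symm
    · have hD : Dfun p₀ m P' (gval g p₀) q = p₀ := by
        simp only [Dfun]
        rw [dif_neg h]
      obtain ⟨i, hpref, hlen⟩ := hu (m - 1)
      rw [hD] at hpref
      exact h ⟨i, hpref, by omega⟩

end SVAux

/-- Every single-valued partial function on Baire space, viewed as a problem, is either
continuous or effectively discontinuous. -/
theorem single_valued_continuous_or_effectively_discontinuous (g : Baire →. Baire) :
    ContinuousProblem (fun p => {y | y ∈ g p}) ∨
      EffectivelyDiscontinuous (fun p => {y | y ∈ g p}) := by
  by_cases hC : ∀ p, (g p).Dom → ∀ m, ∃ k, ∀ p', (g p').Dom → (∀ j < k, p' j = p j) →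
      ∀ j < m, gval g p' j = gval g p j
  · exact Or.inl (continuous_side g hC)
  · right
    push_neg at hC
    obtain ⟨p₀, hp₀, m, hm⟩ := hC
    choose P' hdom hag hne using hm
    have hm0 : 0 < m := by
      obtain ⟨j, hj, -⟩ := hne 0
      omega
    exact ⟨Dfun p₀ m P' (gval g p₀), Dfun_cont p₀ m P' (gval g p₀) hag,
      Dfun_disc g p₀ hp₀ m hm0 P' hdom hag hne⟩
end
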